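/- Let $p$ be a prime and let $a, b, c$ be positive integers such that $c$ is a primitive divisor of $p^a - 1$. Set $u = (p^a - 1)/c$ and $\Psi_\ell(x) = 1 + x + \cdots + x^{\ell-1}$. Then $bc$ is a primitive divisor of $p^{ab} - 1$ if and only if $b \mid u \Psi_b(p^a)$ and $b \nmid u \Psi_\ell(p^a)$ for all $1 \le \ell \le b - 1$. -/

import Mathlib

theorem stmt_1 (p a b c : ℕ) (hp : p.Prime) (ha : 0 < a) (hb : 0 < b) (hc : 0 < c)
    (hcdvd : c ∣ p ^ a - 1) (hcprim : ∀ t, 0 < t → t < a → ¬ c ∣ p ^ t - 1)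
    (u : ℕ) (hu : u = (p ^ a - 1) / c) :
    ((b * c ∣ p ^ (a * b) - 1 ∧ ∀ t, 0 < t → t < a * b → ¬ b * c ∣ p ^ t - 1) ↔
      (b ∣ u * ∑ i ∈ Finset.range b, (p ^ a) ^ i ∧
        ∀ ℓ, 1 ≤ ℓ → ℓ ≤ b - 1 → ¬ b ∣ u * ∑ i ∈ Finset.range ℓ, (p ^ a) ^ i)) := by
  have hq1 : 1 ≤ p ^ a := Nat.one_le_pow _ _ hp.pos
  have hcu : c * u = p ^ a - 1 := by rw [hu, Nat.mul_div_cancel' hcdvd]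
  -- key identity
  have hA : ∀ ℓ : ℕ, p ^ (a * ℓ) - 1 = c * (u * ∑ i ∈ Finset.range ℓ, (p ^ a) ^ i) := by
    intro ℓ
    have hg := geom_sum_mul_add (p ^ a - 1) ℓ
    rw [Nat.sub_add_cancel hq1] at hg
    rw [pow_mul, ← hg, Nat.add_sub_cancel, ← hcu]
    ring
  have hB : ∀ ℓ : ℕ, (b * c ∣ p ^ (a * ℓ) - 1 ↔ b ∣ u * ∑ i ∈ Finset.range ℓ, (p ^ a) ^ i) := by
    intro ℓ
    rw [hA ℓ, mul_comm b c]
    exact Nat.mul_dvd_mul_iff_left hc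
  -- c ∣ p^s - 1 ↔ (p : ZMod c) ^ s = 1
  have hdvdIff : ∀ s : ℕ, c ∣ p ^ s - 1 ↔ ((p : ZMod c)) ^ s = 1 := by
    intro s
    have h1 : (1 : ℕ) ≤ p ^ s := Nat.one_le_pow _ _ hp.pos
    rw [← Nat.modEq_iff_dvd' h1, Nat.ModEq.comm, ← ZMod.natCast_eq_natCast_iff]
    push_cast
    rfl
  constructor
  · rintro ⟨h1, h2⟩
    refine ⟨(hB b).mp h1, fun ℓ hℓ1 hℓ2 hdvd => ?_⟩
    exact h2 (a * ℓ) (by positivity) (by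
      have : ℓ < b := by omega
      exact (Nat.mul_lt_mul_left ha).mpr this) ((hB ℓ).mpr hdvd)
  · rintro ⟨h1, h2⟩
    refine ⟨(hB b).mpr h1, fun t ht hta hdvd => ?_⟩
    have hct : c ∣ p ^ t - 1 := (dvd_mul_left c b).trans hdvd
    have hpt : ((p : ZMod c)) ^ t = 1 := (hdvdIff t).mp hct
    have hpa : ((p : ZMod c)) ^ a = 1 := (hdvdIff a).mp hcdvd
    have hgcd : ((p : ZMod c)) ^ (Nat.gcd t a) = 1 := pow_gcd_eq_one.mpr ⟨hpt, hpa⟩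
    have hcg : c ∣ p ^ (Nat.gcd t a) - 1 := (hdvdIff _).mpr hgcd
    have hgpos : 0 < Nat.gcd t a := Nat.gcd_pos_of_pos_left _ ht
    have hgle : Nat.gcd t a ≤ a := Nat.le_of_dvd ha (Nat.gcd_dvd_right t a)
    have hgeq : Nat.gcd t a = a := by
      by_contra hne
      exact hcprim _ hgpos (lt_of_le_of_ne hgle hne) hcg
    have hat : a ∣ t := hgeq ▸ Nat.gcd_dvd_left t a
    obtain ⟨ℓ, rfl⟩ := hat
    have hℓb : ℓ < b := by
      by_contra h
      exact absurd hta (not_lt.mpr (Nat.mul_le_mul_left a (not_lt.mp h)))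
    have hℓ0 : 0 < ℓ := by
      rcases Nat.eq_zero_or_pos ℓ with h | h
      · subst h; simp at ht
      · exact h
    exact h2 ℓ hℓ0 (by omega) ((hB ℓ).mp hdvd)
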